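/- For a bounded random variable Z on a finite probability space with distribution P₀ and α ∈ (0,1], the conditional value-at-risk CVaR_α(Z) := inf_{η ∈ ℝ} { α^{−1} E_{P₀}[(Z − η)₊] + η } equals sup { E_P[Z] : P ≪ P₀, dP/dP₀ ≤ 1/α }. -/

import Mathlib

/-- CVaR duality on a finite probability space:
inf_η { α⁻¹ E_{P₀}[(Z − η)₊] + η } = sup{E_P[Z] : P ≪ P₀, dP/dP₀ ≤ 1/α}. -/
theorem cvar_duality {α : Type*} [Fintype α] [Nonempty α]
    (p0 : α → ℝ) (hp0 : ∀ x, 0 ≤ p0 x) (hp01 : ∑ x, p0 x = 1)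
    (a : ℝ) (ha : 0 < a) (ha1 : a ≤ 1) (Z : α → ℝ) :
    (⨅ η : ℝ, a⁻¹ * (∑ x, p0 x * max (Z x - η) 0) + η) =
      sSup {r : ℝ | ∃ p : α → ℝ, (∀ x, 0 ≤ p x) ∧ (∑ x, p x) = 1 ∧
        (∀ x, a * p x ≤ p0 x) ∧ r = ∑ x, p x * Z x} := by
  classical
  have haa : a ≠ 0 := ne_of_gt ha
  set S : Set ℝ := {r : ℝ | ∃ p : α → ℝ, (∀ x, 0 ≤ p x) ∧ (∑ x, p x) = 1 ∧
        (∀ x, a * p x ≤ p0 x) ∧ r = ∑ x, p x * Z x} with hSdef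
  set f : ℝ → ℝ := fun η => a⁻¹ * (∑ x, p0 x * max (Z x - η) 0) + η with hfdef
  -- weak duality
  have hub : ∀ r ∈ S, ∀ η : ℝ, r ≤ f η := by
    rintro r ⟨p, hpnn, hp1, hpa, rfl⟩ η
    have key : ∀ x, p x * Z x ≤ a⁻¹ * (p0 x * max (Z x - η) 0) + p x * η := by
      intro x
      have h1 : Z x - η ≤ max (Z x - η) 0 := le_max_left _ _
      have h2 : (0:ℝ) ≤ max (Z x - η) 0 := le_max_right _ _
      have h3 : a * p x ≤ p0 x := hpa x
      have h5 : p x ≤ a⁻¹ * p0 x := by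
        rw [inv_mul_eq_div, le_div_iff₀ ha]; linarith
      have h4 : p x * max (Z x - η) 0 ≤ a⁻¹ * (p0 x * max (Z x - η) 0) := by
        rw [← mul_assoc]
        exact mul_le_mul_of_nonneg_right h5 h2
      nlinarith [mul_le_mul_of_nonneg_left h1 (hpnn x)]
    calc ∑ x, p x * Z x
        ≤ ∑ x, (a⁻¹ * (p0 x * max (Z x - η) 0) + p x * η) :=
          Finset.sum_le_sum (fun x _ => key x)
      _ = f η := by
          rw [Finset.sum_add_distrib, ← Finset.mul_sum, ← Finset.sum_mul, hp1, one_mul]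
  have hp0mem : (∑ x, p0 x * Z x) ∈ S :=
    ⟨p0, hp0, hp01, fun x => by nlinarith [hp0 x], rfl⟩
  have hSne : S.Nonempty := ⟨_, hp0mem⟩
  have hSbdd : BddAbove S := ⟨f 0, fun r hr => hub r hr 0⟩
  have hfbdd : BddBelow (Set.range f) := by
    refine ⟨∑ x, p0 x * Z x, ?_⟩
    rintro _ ⟨η, rfl⟩
    exact hub _ hp0mem η
  -- the quantile construction
  set F : ℝ → ℝ := fun t => ∑ x, if t < Z x then p0 x else 0 with hFdef
  set G : ℝ → ℝ := fun t => ∑ x, if t ≤ Z x then p0 x else 0 with hGdef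
  set T : Finset ℝ := Finset.image Z Finset.univ with hTdef
  have hTne : T.Nonempty := Finset.Nonempty.image Finset.univ_nonempty Z
  have hZT : ∀ x, Z x ∈ T := fun x => Finset.mem_image_of_mem Z (Finset.mem_univ x)
  set T' : Finset ℝ := T.filter (fun t => F t ≤ a) with hT'def
  have hT'ne : T'.Nonempty := by
    refine ⟨T.max' hTne, Finset.mem_filter.mpr ⟨T.max'_mem hTne, ?_⟩⟩
    have : F (T.max' hTne) = 0 := by
      apply Finset.sum_eq_zero
      intro x _
      rw [if_neg]
      exact not_lt.mpr (T.le_max' _ (hZT x))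
    rw [this]; exact le_of_lt ha
  set η : ℝ := T'.min' hT'ne with hηdef
  have hηT' : η ∈ T' := T'.min'_mem hT'ne
  have hA : F η ≤ a := (Finset.mem_filter.mp hηT').2
  have hB : a ≤ G η := by
    by_cases hc : (T.filter (fun t => t < η)).Nonempty
    · set t' : ℝ := (T.filter (fun t => t < η)).max' hc with ht'def
      have ht'mem := (T.filter (fun t => t < η)).max'_mem hc
      have ht'T : t' ∈ T := (Finset.mem_filter.mp ht'mem).1
      have ht'lt : t' < η := (Finset.mem_filter.mp ht'mem).2
      have ht'F : a < F t' := by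
        by_contra h
        push_neg at h
        have : t' ∈ T' := Finset.mem_filter.mpr ⟨ht'T, h⟩
        exact absurd (T'.min'_le _ this) (not_le.mpr ht'lt)
      have hsub : ∀ x, (if t' < Z x then p0 x else 0) ≤ (if η ≤ Z x then p0 x else 0) := by
        intro x
        split_ifs with h1 h2
        · exact le_refl _
        · exfalso
          have hmem : Z x ∈ T.filter (fun t => t < η) :=
            Finset.mem_filter.mpr ⟨hZT x, lt_of_not_ge h2⟩
          exact absurd ((T.filter (fun t => t < η)).le_max' _ hmem) (not_le.mpr h1)
        · exact hp0 x
        · exact le_refl _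
      have : F t' ≤ G η := Finset.sum_le_sum (fun x _ => hsub x)
      linarith
    · have hall : ∀ x, η ≤ Z x := by
        intro x
        by_contra h
        exact hc ⟨Z x, Finset.mem_filter.mpr ⟨hZT x, lt_of_not_ge h⟩⟩
      have : G η = 1 := by
        rw [← hp01]
        apply Finset.sum_congr rfl
        intro x _
        rw [if_pos (hall x)]
      linarith
  have hFnn : 0 ≤ F η := Finset.sum_nonneg (fun x _ => by
    split_ifs
    · exact hp0 x
    · exact le_refl _)
  have hFG : F η ≤ G η := by
    apply Finset.sum_le_sum
    intro x _
    split_ifs with h1 h2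
    · exact le_refl _
    · exact absurd (le_of_lt h1) h2
    · exact hp0 x
    · exact le_refl _
  -- the mixing coefficient
  set c : ℝ := if G η = F η then 0 else (a - F η) / (G η - F η) with hcdef
  have hc0 : 0 ≤ c := by
    rw [hcdef]
    split_ifs with h
    · exact le_refl _
    · have : F η < G η := lt_of_le_of_ne hFG (Ne.symm h)
      apply div_nonneg <;> linarith
  have hc1 : c ≤ 1 := by
    rw [hcdef]
    split_ifs with h
    · exact zero_le_one
    · have hlt : F η < G η := lt_of_le_of_ne hFG (Ne.symm h)
      rw [div_le_one (by linarith)]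
      linarith
  have hckey : c * (G η - F η) = a - F η := by
    rw [hcdef]
    split_ifs with h
    · have : F η = a := le_antisymm hA (by rw [← h]; exact hB)
      rw [h, this]; ring
    · exact div_mul_cancel₀ _ (sub_ne_zero_of_ne h)
  -- the optimal p
  set p : α → ℝ := fun x => if η < Z x then p0 x / a else if Z x = η then c * p0 x / a else 0
    with hpdef
  have hpnn : ∀ x, 0 ≤ p x := by
    intro x
    rw [hpdef]
    dsimp only
    split_ifs with h1 h2
    · exact div_nonneg (hp0 x) (le_of_lt ha)
    · exact div_nonneg (mul_nonneg hc0 (hp0 x)) (le_of_lt ha)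
    · exact le_refl _
  have hGFsum : G η - F η = ∑ x, if Z x = η then p0 x else 0 := by
    have : ∀ x, (if η ≤ Z x then p0 x else 0) =
        (if Z x = η then p0 x else 0) + (if η < Z x then p0 x else 0) := by
      intro x
      rcases lt_trichotomy (Z x) η with h | h | h
      · rw [if_neg (not_le.mpr h), if_neg (ne_of_lt h), if_neg (not_lt.mpr (le_of_lt h))]; ring
      · rw [if_pos (le_of_eq h.symm), if_pos h, if_neg (not_lt.mpr (le_of_eq h))]; ring
      · rw [if_pos (le_of_lt h), if_neg (ne_of_gt h), if_pos h]; ring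
    have hG : G η = (∑ x, if Z x = η then p0 x else 0) + F η := by
      rw [hGdef, hFdef]
      dsimp only
      rw [← Finset.sum_add_distrib]
      exact Finset.sum_congr rfl (fun x _ => this x)
    linarith
  have hpt : ∀ x, p x = ((if η < Z x then p0 x else 0) + c * (if Z x = η then p0 x else 0)) / a := by
    intro x
    rw [hpdef]
    dsimp only
    rcases lt_trichotomy (Z x) η with h | h | h
    · rw [if_neg (not_lt.mpr (le_of_lt h)), if_neg (ne_of_lt h), if_neg (not_lt.mpr (le_of_lt h)),
        if_neg (ne_of_lt h)]
      simp
    · rw [if_neg (not_lt.mpr (le_of_eq h)), if_pos h, if_neg (not_lt.mpr (le_of_eq h)),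
        if_pos h]
      ring
    · rw [if_pos h, if_pos h, if_neg (ne_of_gt h)]
      ring
  have hpsum : ∑ x, p x = 1 := by
    have : ∑ x, p x = (F η + c * (G η - F η)) / a := by
      rw [Finset.sum_congr rfl (fun x _ => hpt x), ← Finset.sum_div, Finset.sum_add_distrib,
        ← Finset.mul_sum, hGFsum, hFdef]
    rw [this, hckey]
    field_simp
    ring
  have hpa : ∀ x, a * p x ≤ p0 x := by
    intro x
    rw [hpdef]
    dsimp only
    split_ifs with h1 h2
    · rw [mul_comm, div_mul_cancel₀ _ haa]
    · rw [mul_comm, div_mul_cancel₀ _ haa]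
      nlinarith [hp0 x, hc1]
    · rw [mul_zero]; exact hp0 x
  -- the value at η
  have hSZ : ∑ x, p0 x * max (Z x - η) 0 =
      (∑ x, if η < Z x then p0 x * Z x else 0) - η * F η := by
    rw [hFdef]
    dsimp only
    rw [Finset.mul_sum, ← Finset.sum_sub_distrib]
    apply Finset.sum_congr rfl
    intro x _
    rcases lt_or_ge η (Z x) with h | h
    · rw [if_pos h, if_pos h, max_eq_left (by linarith)]; ring
    · rw [if_neg (not_lt.mpr h), if_neg (not_lt.mpr h), max_eq_right (by linarith)]; ring
  have hPZ : ∑ x, p x * Z x =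
      ((∑ x, if η < Z x then p0 x * Z x else 0) + c * η * (G η - F η)) / a := by
    rw [hGFsum, Finset.mul_sum, ← Finset.sum_add_distrib, Finset.sum_div]
    apply Finset.sum_congr rfl
    intro x _
    rw [hpdef]
    dsimp only
    rcases lt_trichotomy (Z x) η with h | h | h
    · rw [if_neg (not_lt.mpr (le_of_lt h)), if_neg (ne_of_lt h), if_neg (not_lt.mpr (le_of_lt h)),
        if_neg (ne_of_lt h)]
      simp
    · rw [if_neg (not_lt.mpr (le_of_eq h)), if_pos h, if_neg (not_lt.mpr (le_of_eq h)),
        if_pos h, h]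
      ring
    · rw [if_pos h, if_pos h, if_neg (ne_of_gt h)]
      ring
  have hfval : f η = ∑ x, p x * Z x := by
    have h1 : c * η * (G η - F η) = η * (a - F η) := by
      rw [mul_comm c η, mul_assoc, hckey]
    rw [hPZ, h1, hfdef]
    dsimp only
    rw [hSZ]
    field_simp
    ring
  -- conclusion
  apply le_antisymm
  · refine le_trans (ciInf_le hfbdd η) ?_
    have : f η ∈ S := by
      rw [hfval]
      exact ⟨p, hpnn, hpsum, hpa, rfl⟩
    exact le_csSup hSbdd this
  · exact csSup_le hSne (fun r hr => le_ciInf (hub r hr))
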